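/- Let ζ = (ζ₁,ζ₂,ζ₃) ∈ {−1,0,1}³ with ζ ≠ (0,0,0) and λ₁, λ₂, λ₃ > 0, with f, ∇ and the composition tensor T as in the context. If T(X,X) = 0 for all X ∈ m (i.e., f is a G₁f-structure), then either T(X,Y) = 0 for all X, Y ∈ m (f is a Hermitian f-structure) or (∇_{fX} f)(fX) = 0 for all X ∈ m (f is a nearly Kähler f-structure). In other words, the flag manifold SU(3)/T_max admits no invariant strictly G₁f-structures; in particular, it admits no invariant almost Hermitian structures of class G₁ that are neither nearly Kähler nor Hermitian. -/

import Mathlib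

open ComplexConjugate Matrix

noncomputable section

/-- The matrix D(a,b,c) ∈ su(3): zero diagonal, X₁₂ = a, X₂₁ = −conj a,
X₂₃ = b, X₃₂ = −conj b, X₁₃ = conj c, X₃₁ = −c. -/
def Dm (a b c : ℂ) : Matrix (Fin 3) (Fin 3) ℂ :=
  !![0, a, conj c; -conj a, 0, b; -c, -conj b, 0]

/-- The real Lie algebra su(3) of traceless skew-Hermitian 3×3 complex
matrices (as a set of matrices, with bracket [X,Y] = XY − YX). -/
def su3 : Set (Matrix (Fin 3) (Fin 3) ℂ) :=
  {X | Xᴴ = -X ∧ X.trace = 0}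

/-- h: the diagonal matrices in su(3). -/
def hSet : Set (Matrix (Fin 3) (Fin 3) ℂ) :=
  {X | X ∈ su3 ∧ ∀ i j, i ≠ j → X i j = 0}

/-- m = {D(a,b,c)}. -/
def mSet : Set (Matrix (Fin 3) (Fin 3) ℂ) :=
  {X | ∃ a b c : ℂ, X = Dm a b c}

/-- The three components m₁, m₂, m₃ of m. -/
def mComp : Fin 3 → Set (Matrix (Fin 3) (Fin 3) ℂ) :=
  ![{X | ∃ a : ℂ, X = Dm a 0 0}, {X | ∃ b : ℂ, X = Dm 0 b 0},
    {X | ∃ c : ℂ, X = Dm 0 0 c}]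

/-- ⟨X,Y⟩₀ = −½ Re tr(XY). -/
def inner0 (X Y : Matrix (Fin 3) (Fin 3) ℂ) : ℝ :=
  -(1 / 2) * ((X * Y).trace).re

end

noncomputable section

/-- The m-component of a matrix in su(3) = h ⊕ m (h the diagonal part):
zero out the diagonal. -/
def projm (Z : Matrix (Fin 3) (Fin 3) ℂ) : Matrix (Fin 3) (Fin 3) ℂ :=
  Z - Matrix.diagonal fun i => Z i i

/-- Projections of m onto its components m₁, m₂, m₃. -/
def mProj : Fin 3 → (Matrix (Fin 3) (Fin 3) ℂ → Matrix (Fin 3) (Fin 3) ℂ) :=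
  ![fun X => Dm (X 0 1) 0 0, fun X => Dm 0 (X 1 2) 0, fun X => Dm 0 0 (-(X 2 0))]

/-- The invariant metric g = (λ₁,λ₂,λ₃): g(X,Y) = Σ_j λ_j ⟨X_j, Y_j⟩₀ for
X, Y ∈ m, where X_j is the m_j-component; m₁, m₂, m₃ are mutually
orthogonal. -/
def gmet (lam : Fin 3 → ℝ) (X Y : Matrix (Fin 3) (Fin 3) ℂ) : ℝ :=
  ∑ j : Fin 3, lam j * inner0 (mProj j X) (mProj j Y)

end

noncomputable section

/-- The invariant f-structure with characteristic collection (ζ₁,ζ₂,ζ₃):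
f(D(a,b,c)) = D(ζ₁ia, ζ₂ib, ζ₃ic). -/
def fm (z : Fin 3 → ℝ) (X : Matrix (Fin 3) (Fin 3) ℂ) :
    Matrix (Fin 3) (Fin 3) ℂ :=
  Dm ((z 0 : ℂ) * Complex.I * X 0 1) ((z 1 : ℂ) * Complex.I * X 1 2)
    ((z 2 : ℂ) * Complex.I * (-(X 2 0)))

/-- The Nomizu function α(X,Y) = ½[X,Y]_m + U(X,Y) of the Levi-Civita
connection. -/
def alphaU (U : Matrix (Fin 3) (Fin 3) ℂ → Matrix (Fin 3) (Fin 3) ℂ →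
      Matrix (Fin 3) (Fin 3) ℂ)
    (X Y : Matrix (Fin 3) (Fin 3) ℂ) : Matrix (Fin 3) (Fin 3) ℂ :=
  (1 / 2 : ℝ) • projm ⁅X, Y⁆ + U X Y

/-- The covariant derivative (∇_X f)(Y) = α(X, fY) − f(α(X,Y)). -/
def nablaU (U : Matrix (Fin 3) (Fin 3) ℂ → Matrix (Fin 3) (Fin 3) ℂ →
      Matrix (Fin 3) (Fin 3) ℂ)
    (z : Fin 3 → ℝ) (X Y : Matrix (Fin 3) (Fin 3) ℂ) :
    Matrix (Fin 3) (Fin 3) ℂ :=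
  alphaU U X (fm z Y) - fm z (alphaU U X Y)

/-- The composition tensor T(X,Y) = ¼ f((∇_{fX} f)(fY) − (∇_{f²X} f)(f²Y)). -/
def TU (U : Matrix (Fin 3) (Fin 3) ℂ → Matrix (Fin 3) (Fin 3) ℂ →
      Matrix (Fin 3) (Fin 3) ℂ)
    (z : Fin 3 → ℝ) (X Y : Matrix (Fin 3) (Fin 3) ℂ) :
    Matrix (Fin 3) (Fin 3) ℂ :=
  (1 / 4 : ℝ) • fm z (nablaU U z (fm z X) (fm z Y) -
    nablaU U z (fm z (fm z X)) (fm z (fm z Y)))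

end

/-- The flag manifold SU(3)/T_max admits no invariant strictly
G₁f-structures: if T(X,X) = 0 for all X ∈ m (f is a G₁f-structure), then
either T ≡ 0 on m (f is a Hermitian f-structure) or (∇_{fX} f)(fX) = 0 for
all X ∈ m (f is a nearly Kähler f-structure). -/
lemma Dm_apply01 (a b c : ℂ) : Dm a b c 0 1 = a := by simp [Dm]
lemma Dm_apply12 (a b c : ℂ) : Dm a b c 1 2 = b := by simp [Dm]
lemma Dm_apply20 (a b c : ℂ) : Dm a b c 2 0 = -c := by simp [Dm]

lemma bracket_proj (a b c p q r : ℂ) :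
    projm ⁅Dm a b c, Dm p q r⁆ =
      Dm (conj (b*r - c*q)) (conj (p*c - a*r)) (conj (a*q - b*p)) := by
  ext i j
  fin_cases i <;> fin_cases j <;>
    simp [projm, Dm, Ring.lie_def, Matrix.mul_apply, Fin.sum_univ_three,
      Matrix.sub_apply, Matrix.diagonal] <;> ring

lemma fm_Dm (z : Fin 3 → ℝ) (a b c : ℂ) :
    fm z (Dm a b c) = Dm ((z 0 : ℂ) * Complex.I * a) ((z 1 : ℂ) * Complex.I * b)
      ((z 2 : ℂ) * Complex.I * c) := by
  simp [fm, Dm]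

lemma gmet_Dm (lam : Fin 3 → ℝ) (a b c p q r : ℂ) :
    gmet lam (Dm a b c) (Dm p q r) =
      lam 0 * (a * conj p).re + lam 1 * (b * conj q).re + lam 2 * (c * conj r).re := by
  simp only [gmet, Fin.sum_univ_three, mProj, inner0]
  simp [Dm, Matrix.trace, Fin.sum_univ_three, Matrix.mul_apply, Complex.mul_re,
    Complex.conj_re, Complex.conj_im]
  ring

/-- Explicit formula for U. -/
noncomputable def Uexp (lam : Fin 3 → ℝ) (a b c p q r : ℂ) : Matrix (Fin 3) (Fin 3) ℂ :=
  Dm ((((lam 2 - lam 1)/(2*lam 0) : ℝ) : ℂ) * conj (b*r + c*q))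
     ((((lam 0 - lam 2)/(2*lam 1) : ℝ) : ℂ) * conj (a*r + c*p))
     ((((lam 1 - lam 0)/(2*lam 2) : ℝ) : ℂ) * conj (a*q + b*p))

lemma Uexp_id (lam : Fin 3 → ℝ) (hlam : ∀ j, 0 < lam j) (a b c p q r w1 w2 w3 : ℂ) :
    2 * gmet lam (Uexp lam a b c p q r) (Dm w1 w2 w3) =
      gmet lam (Dm a b c) (projm ⁅Dm w1 w2 w3, Dm p q r⁆) +
        gmet lam (projm ⁅Dm w1 w2 w3, Dm a b c⁆) (Dm p q r) := by
  have h0 := (hlam 0).ne'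
  have h1 := (hlam 1).ne'
  have h2 := (hlam 2).ne'
  rw [Uexp, bracket_proj, bracket_proj, gmet_Dm, gmet_Dm, gmet_Dm]
  simp only [Complex.mul_re, Complex.mul_im, Complex.conj_re, Complex.conj_im,
    Complex.add_re, Complex.add_im, Complex.sub_re, Complex.sub_im,
    Complex.ofReal_re, Complex.ofReal_im, Complex.neg_re, Complex.neg_im]
  field_simp
  ring

lemma gmet_self_unique (lam : Fin 3 → ℝ) (hlam : ∀ j, 0 < lam j)
    (u1 u2 u3 v1 v2 v3 : ℂ)
    (h : ∀ w1 w2 w3 : ℂ, gmet lam (Dm u1 u2 u3) (Dm w1 w2 w3) =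
      gmet lam (Dm v1 v2 v3) (Dm w1 w2 w3)) :
    u1 = v1 ∧ u2 = v2 ∧ u3 = v3 := by
  have h' := h (u1 - v1) (u2 - v2) (u3 - v3)
  rw [gmet_Dm, gmet_Dm] at h'
  simp only [Complex.mul_re, Complex.conj_re, Complex.conj_im, Complex.sub_re,
    Complex.sub_im] at h'
  have e1 : Complex.normSq (u1 - v1) = 0 := by
    have := Complex.normSq_nonneg (u1 - v1)
    have := Complex.normSq_nonneg (u2 - v2)
    have := Complex.normSq_nonneg (u3 - v3)
    simp only [Complex.normSq_apply, Complex.sub_re, Complex.sub_im] at *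
    nlinarith [hlam 0, hlam 1, hlam 2]
  have e2 : Complex.normSq (u2 - v2) = 0 := by
    have := Complex.normSq_nonneg (u1 - v1)
    have := Complex.normSq_nonneg (u3 - v3)
    simp only [Complex.normSq_apply, Complex.sub_re, Complex.sub_im] at *
    nlinarith [hlam 0, hlam 1, hlam 2]
  have e3 : Complex.normSq (u3 - v3) = 0 := by
    have := Complex.normSq_nonneg (u1 - v1)
    have := Complex.normSq_nonneg (u2 - v2)
    simp only [Complex.normSq_apply, Complex.sub_re, Complex.sub_im] at *
    nlinarith [hlam 0, hlam 1, hlam 2]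
  refine ⟨?_, ?_, ?_⟩ <;> rw [← sub_eq_zero, ← Complex.normSq_eq_zero]
  exacts [e1, e2, e3]

lemma Dm_mem : ∀ a b c : ℂ, Dm a b c ∈ mSet := fun a b c => ⟨a, b, c, rfl⟩

lemma U_eq' (lam : Fin 3 → ℝ) (hlam : ∀ j, 0 < lam j)
    (U : Matrix (Fin 3) (Fin 3) ℂ → Matrix (Fin 3) (Fin 3) ℂ →
      Matrix (Fin 3) (Fin 3) ℂ)
    (hUmem : ∀ X ∈ mSet, ∀ Y ∈ mSet, U X Y ∈ mSet)
    (hUdef : ∀ X ∈ mSet, ∀ Y ∈ mSet, ∀ Z ∈ mSet,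
      2 * gmet lam (U X Y) Z =
        gmet lam X (projm ⁅Z, Y⁆) + gmet lam (projm ⁅Z, X⁆) Y)
    (a b c p q r : ℂ) :
    U (Dm a b c) (Dm p q r) = Uexp lam a b c p q r := by
  obtain ⟨u1, u2, u3, hu⟩ := hUmem _ (Dm_mem a b c) _ (Dm_mem p q r)
  rw [hu]
  have key : ∀ w1 w2 w3 : ℂ, gmet lam (Dm u1 u2 u3) (Dm w1 w2 w3) =
      gmet lam (Uexp lam a b c p q r) (Dm w1 w2 w3) := by
    intro w1 w2 w3
    have h1 := hUdef _ (Dm_mem a b c) _ (Dm_mem p q r) _ (Dm_mem w1 w2 w3)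
    rw [hu] at h1
    have h2 := Uexp_id lam hlam a b c p q r w1 w2 w3
    linarith
  obtain ⟨e1, e2, e3⟩ := gmet_self_unique lam hlam u1 u2 u3 _ _ _ key
  rw [Uexp] at *
  rw [e1, e2, e3]

lemma Dm_congr {a b c p q r : ℂ} (h1 : a = p) (h2 : b = q) (h3 : c = r) :
    Dm a b c = Dm p q r := by rw [h1, h2, h3]

lemma Dm_sub (a b c p q r : ℂ) : Dm a b c - Dm p q r = Dm (a-p) (b-q) (c-r) := by
  ext i j; fin_cases i <;> fin_cases j <;> simp [Dm] <;> ring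

lemma Dm_smul (t : ℝ) (a b c : ℂ) : t • Dm a b c = Dm (t*a) (t*b) (t*c) := by
  ext i j; fin_cases i <;> fin_cases j <;>
    simp [Dm, Complex.real_smul] <;> ring

lemma Dm_add (a b c p q r : ℂ) : Dm a b c + Dm p q r = Dm (a+p) (b+q) (c+r) := by
  ext i j; fin_cases i <;> fin_cases j <;> simp [Dm] <;> ring

lemma alpha_formula (lam : Fin 3 → ℝ) (hlam : ∀ j, 0 < lam j)
    (U : Matrix (Fin 3) (Fin 3) ℂ → Matrix (Fin 3) (Fin 3) ℂ →
      Matrix (Fin 3) (Fin 3) ℂ)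
    (hUmem : ∀ X ∈ mSet, ∀ Y ∈ mSet, U X Y ∈ mSet)
    (hUdef : ∀ X ∈ mSet, ∀ Y ∈ mSet, ∀ Z ∈ mSet,
      2 * gmet lam (U X Y) Z =
        gmet lam X (projm ⁅Z, Y⁆) + gmet lam (projm ⁅Z, X⁆) Y)
    (a b c p q r : ℂ) :
    alphaU U (Dm a b c) (Dm p q r) =
      Dm ((((lam 0 + lam 2 - lam 1)/(2*lam 0) : ℝ) : ℂ) * (conj b * conj r)
            + (((- lam 0 + lam 2 - lam 1)/(2*lam 0) : ℝ) : ℂ) * (conj c * conj q))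
         ((((lam 1 + lam 0 - lam 2)/(2*lam 1) : ℝ) : ℂ) * (conj p * conj c)
            + (((- lam 1 + lam 0 - lam 2)/(2*lam 1) : ℝ) : ℂ) * (conj a * conj r))
         ((((lam 2 + lam 1 - lam 0)/(2*lam 2) : ℝ) : ℂ) * (conj a * conj q)
            + (((- lam 2 + lam 1 - lam 0)/(2*lam 2) : ℝ) : ℂ) * (conj b * conj p)) := by
  have h0 : ((lam 0 : ℝ) : ℂ) ≠ 0 := Complex.ofReal_ne_zero.mpr (hlam 0).ne'
  have h1 : ((lam 1 : ℝ) : ℂ) ≠ 0 := Complex.ofReal_ne_zero.mpr (hlam 1).ne'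
  have h2 : ((lam 2 : ℝ) : ℂ) ≠ 0 := Complex.ofReal_ne_zero.mpr (hlam 2).ne'
  rw [alphaU, U_eq' lam hlam U hUmem hUdef, bracket_proj, Uexp, Dm_smul, Dm_add]
  refine Dm_congr ?_ ?_ ?_ <;>
    · simp only [_root_.map_mul, map_add, map_sub, Complex.conj_conj]
      push_cast
      field_simp
      ring

lemma nabla_formula (lam : Fin 3 → ℝ) (hlam : ∀ j, 0 < lam j) (z : Fin 3 → ℝ)
    (U : Matrix (Fin 3) (Fin 3) ℂ → Matrix (Fin 3) (Fin 3) ℂ →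
      Matrix (Fin 3) (Fin 3) ℂ)
    (hUmem : ∀ X ∈ mSet, ∀ Y ∈ mSet, U X Y ∈ mSet)
    (hUdef : ∀ X ∈ mSet, ∀ Y ∈ mSet, ∀ Z ∈ mSet,
      2 * gmet lam (U X Y) Z =
        gmet lam X (projm ⁅Z, Y⁆) + gmet lam (projm ⁅Z, X⁆) Y)
    (a b c p q r : ℂ) :
    nablaU U z (Dm a b c) (Dm p q r) =
      Dm (-Complex.I * ((((lam 0 + lam 2 - lam 1)/(2*lam 0) * (z 2 + z 0) : ℝ) : ℂ) * (conj b * conj r)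
            + (((- lam 0 + lam 2 - lam 1)/(2*lam 0) * (z 1 + z 0) : ℝ) : ℂ) * (conj c * conj q)))
         (-Complex.I * ((((lam 1 + lam 0 - lam 2)/(2*lam 1) * (z 0 + z 1) : ℝ) : ℂ) * (conj p * conj c)
            + (((- lam 1 + lam 0 - lam 2)/(2*lam 1) * (z 2 + z 1) : ℝ) : ℂ) * (conj a * conj r)))
         (-Complex.I * ((((lam 2 + lam 1 - lam 0)/(2*lam 2) * (z 1 + z 2) : ℝ) : ℂ) * (conj a * conj q)
            + (((- lam 2 + lam 1 - lam 0)/(2*lam 2) * (z 0 + z 2) : ℝ) : ℂ) * (conj b * conj p))) := by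
  rw [nablaU, fm_Dm, alpha_formula lam hlam U hUmem hUdef,
    alpha_formula lam hlam U hUmem hUdef, fm_Dm, Dm_sub]
  refine Dm_congr ?_ ?_ ?_ <;>
    · simp only [_root_.map_mul, map_add, map_sub, map_neg, Complex.conj_conj,
        Complex.conj_I, Complex.conj_ofReal]
      push_cast
      ring

set_option maxHeartbeats 1000000 in
lemma T_formula (lam : Fin 3 → ℝ) (hlam : ∀ j, 0 < lam j) (z : Fin 3 → ℝ)
    (U : Matrix (Fin 3) (Fin 3) ℂ → Matrix (Fin 3) (Fin 3) ℂ →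
      Matrix (Fin 3) (Fin 3) ℂ)
    (hUmem : ∀ X ∈ mSet, ∀ Y ∈ mSet, U X Y ∈ mSet)
    (hUdef : ∀ X ∈ mSet, ∀ Y ∈ mSet, ∀ Z ∈ mSet,
      2 * gmet lam (U X Y) Z =
        gmet lam X (projm ⁅Z, Y⁆) + gmet lam (projm ⁅Z, X⁆) Y)
    (a b c p q r : ℂ) :
    TU U z (Dm a b c) (Dm p q r) =
      Dm (((-(1/4) * z 0 * (z 1 * z 2) * (1 + z 1 * z 2) : ℝ) : ℂ) *
            ((((lam 0 + lam 2 - lam 1)/(2*lam 0) * (z 2 + z 0) : ℝ) : ℂ) * (conj b * conj r)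
              + (((- lam 0 + lam 2 - lam 1)/(2*lam 0) * (z 1 + z 0) : ℝ) : ℂ) * (conj c * conj q)))
         (((-(1/4) * z 1 * (z 2 * z 0) * (1 + z 2 * z 0) : ℝ) : ℂ) *
            ((((lam 1 + lam 0 - lam 2)/(2*lam 1) * (z 0 + z 1) : ℝ) : ℂ) * (conj p * conj c)
              + (((- lam 1 + lam 0 - lam 2)/(2*lam 1) * (z 2 + z 1) : ℝ) : ℂ) * (conj a * conj r)))
         (((-(1/4) * z 2 * (z 0 * z 1) * (1 + z 0 * z 1) : ℝ) : ℂ) *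
            ((((lam 2 + lam 1 - lam 0)/(2*lam 2) * (z 1 + z 2) : ℝ) : ℂ) * (conj a * conj q)
              + (((- lam 2 + lam 1 - lam 0)/(2*lam 2) * (z 0 + z 2) : ℝ) : ℂ) * (conj b * conj p))) := by
  rw [TU]
  simp only [fm_Dm]
  rw [nabla_formula lam hlam z U hUmem hUdef, nabla_formula lam hlam z U hUmem hUdef,
    Dm_sub, fm_Dm, Dm_smul]
  refine Dm_congr ?_ ?_ ?_ <;>
    · simp only [_root_.map_mul, map_add, map_sub, map_neg, Complex.conj_conj,
        Complex.conj_I, Complex.conj_ofReal]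
      push_cast
      ring_nf
      simp only [show (Complex.I:ℂ)^6 = -1 by norm_num [pow_succ, Complex.I_sq],
        show (Complex.I:ℂ)^2 = -1 from Complex.I_sq,
        show (Complex.I:ℂ)^4 = 1 by norm_num [pow_succ, Complex.I_sq],
        show (Complex.I:ℂ)^3 = -Complex.I by norm_num [pow_succ, Complex.I_sq]]
      ring

lemma Dm_zero : Dm 0 0 0 = (0 : Matrix (Fin 3) (Fin 3) ℂ) := by
  ext i j; fin_cases i <;> fin_cases j <;> simp [Dm, Matrix.vecHead, Matrix.vecTail]

lemma Dm_eq_zero_iff {a b c : ℂ} : Dm a b c = 0 ↔ a = 0 ∧ b = 0 ∧ c = 0 := by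
  constructor
  · intro h
    exact ⟨by simpa [Dm] using congrFun (congrFun h 0) 1,
      by simpa [Dm] using congrFun (congrFun h 1) 2,
      by simpa [Dm, neg_eq_zero] using congrFun (congrFun h 2) 0⟩
  · rintro ⟨rfl, rfl, rfl⟩; exact Dm_zero
set_option maxHeartbeats 4000000 in
theorem stmt_14 (z : Fin 3 → ℝ) (hz : ∀ j, z j = -1 ∨ z j = 0 ∨ z j = 1)
    (hz0 : ¬(z 0 = 0 ∧ z 1 = 0 ∧ z 2 = 0))
    (lam : Fin 3 → ℝ) (hlam : ∀ j, 0 < lam j)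
    (U : Matrix (Fin 3) (Fin 3) ℂ → Matrix (Fin 3) (Fin 3) ℂ →
      Matrix (Fin 3) (Fin 3) ℂ)
    (hUmem : ∀ X ∈ mSet, ∀ Y ∈ mSet, U X Y ∈ mSet)
    (hUsymm : ∀ X ∈ mSet, ∀ Y ∈ mSet, U X Y = U Y X)
    (hUdef : ∀ X ∈ mSet, ∀ Y ∈ mSet, ∀ Z ∈ mSet,
      2 * gmet lam (U X Y) Z =
        gmet lam X (projm ⁅Z, Y⁆) + gmet lam (projm ⁅Z, X⁆) Y)
    (hG1 : ∀ X ∈ mSet, TU U z X X = 0) :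
    (∀ X ∈ mSet, ∀ Y ∈ mSet, TU U z X Y = 0) ∨
      (∀ X ∈ mSet, nablaU U z (fm z X) (fm z X) = 0) := by

  have L0 : ((lam 0 : ℝ) : ℂ) ≠ 0 := Complex.ofReal_ne_zero.mpr (hlam 0).ne'
  have L1 : ((lam 1 : ℝ) : ℂ) ≠ 0 := Complex.ofReal_ne_zero.mpr (hlam 1).ne'
  have L2 : ((lam 2 : ℝ) : ℂ) ≠ 0 := Complex.ofReal_ne_zero.mpr (hlam 2).ne'
  have l0 := (hlam 0).ne'
  have l1 := (hlam 1).ne'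
  have l2 := (hlam 2).ne'
  rcases hz 0 with h0 | h0 | h0 <;> rcases hz 1 with h1 | h1 | h1 <;>
    rcases hz 2 with h2 | h2 | h2
  all_goals
    first
    | · left
        intro X hX Y hY
        obtain ⟨a, b, c, rfl⟩ := hX
        obtain ⟨p, q, r, rfl⟩ := hY
        rw [T_formula lam hlam z U hUmem hUdef, Dm_eq_zero_iff]
        refine ⟨?_, ?_, ?_⟩ <;> rw [h0, h1, h2] <;> norm_num
    | · right
        have hT := hG1 (Dm 1 1 1) (Dm_mem 1 1 1)
        rw [T_formula lam hlam z U hUmem hUdef, Dm_eq_zero_iff] at hT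
        obtain ⟨e1, e2, e3⟩ := hT
        rw [h0, h1, h2] at e1 e2 e3
        simp only [_root_.map_one, mul_one] at e1 e2 e3
        norm_cast at e1 e2 e3
        have q1 : lam 2 = lam 1 := by field_simp at e1; norm_num at e1; linarith
        have q2 : lam 0 = lam 2 := by field_simp at e2; norm_num at e2; linarith
        intro X hX
        obtain ⟨a, b, c, rfl⟩ := hX
        rw [fm_Dm, nabla_formula lam hlam z U hUmem hUdef, Dm_eq_zero_iff]
        refine ⟨?_, ?_, ?_⟩ <;>
          · simp only [_root_.map_mul, Complex.conj_I, Complex.conj_ofReal]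
            rw [h0, h1, h2, q2, q1]
            push_cast
            field_simp
            try ring
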